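/- Let (Ω, 𝔽, ℙ) be a probability space, let B be a normed real vector space, let X : Ω → B be a strongly measurable random variable, let q > 0, and let K > 0 be a constant such that E‖X‖^{2q} < ∞ and ( E‖X‖^{2q} )^{1/2} ≤ K · E‖X‖^{q}. If there exists R > 0 such that ℙ( ‖X‖ > R ) ≤ 1/(4K²), then E‖X‖^{q} ≤ 2 R^{q}. -/

import Mathlib

open MeasureTheory

/-- If a Banach-space-valued random variable satisfies a reverse-Hölder
moment comparison `(E‖X‖^{2q})^{1/2} ≤ K·E‖X‖^q` and `ℙ(‖X‖ > R) ≤ 1/(4K²)` for some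
`R > 0`, then `E‖X‖^q ≤ 2R^q`. -/
theorem moment_bound_of_small_tail
    {Ω B : Type*} [MeasurableSpace Ω] (μ : Measure Ω) [IsProbabilityMeasure μ]
    [NormedAddCommGroup B] [NormedSpace ℝ B]
    (X : Ω → B) (hX : StronglyMeasurable X)
    (q : ℝ) (hq : 0 < q) (K : ℝ) (hK : 0 < K)
    (hmom : Integrable (fun ω => ‖X ω‖ ^ (2 * q)) μ)
    (hrev : (∫ ω, ‖X ω‖ ^ (2 * q) ∂μ) ^ ((1 : ℝ) / 2) ≤ K * ∫ ω, ‖X ω‖ ^ q ∂μ)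
    (R : ℝ) (hR : 0 < R)
    (htail : μ {ω | R < ‖X ω‖} ≤ ENNReal.ofReal (1 / (4 * K ^ 2))) :
    ∫ ω, ‖X ω‖ ^ q ∂μ ≤ 2 * R ^ q := by
  set A : Set Ω := {ω | R < ‖X ω‖} with hAdef
  set f : Ω → ℝ := fun ω => ‖X ω‖ ^ q with hfdef
  have hnorm : Measurable fun ω => ‖X ω‖ := hX.norm.measurable
  have hfmeas : Measurable f := hnorm.pow_const q
  have hA : MeasurableSet A := measurableSet_lt measurable_const hnorm
  have hfnonneg : ∀ ω, 0 ≤ f ω := fun ω => Real.rpow_nonneg (norm_nonneg _) q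
  -- f squared equals ‖X‖^(2q)
  have hsq : ∀ ω, ‖X ω‖ ^ (2 * q) = f ω ^ (2 : ℕ) := by
    intro ω
    rw [hfdef, ← Real.rpow_natCast (‖X ω‖ ^ q) 2, ← Real.rpow_mul (norm_nonneg _)]
    norm_num; ring_nf
  have hfint : Integrable f μ := by
    refine Integrable.mono' ((integrable_const (1 : ℝ)).add hmom)
      hfmeas.aestronglyMeasurable (Filter.Eventually.of_forall fun ω => ?_)
    rw [Real.norm_of_nonneg (hfnonneg ω)]
    simp only [Pi.add_apply]
    rcases le_or_gt (‖X ω‖) 1 with h1 | h1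
    · have : f ω ≤ 1 := Real.rpow_le_one (norm_nonneg _) h1 hq.le
      have h2 : 0 ≤ ‖X ω‖ ^ (2 * q) := Real.rpow_nonneg (norm_nonneg _) _
      linarith
    · have : f ω ≤ ‖X ω‖ ^ (2 * q) :=
        Real.rpow_le_rpow_of_exponent_le h1.le (by linarith)
      linarith
  have hf2 : MemLp f (ENNReal.ofReal 2) μ := by
    rw [show (ENNReal.ofReal 2) = 2 by simp]
    exact (memLp_two_iff_integrable_sq hfmeas.aestronglyMeasurable).mpr
      (hmom.congr (Filter.Eventually.of_forall fun ω => hsq ω))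
  set g : Ω → ℝ := A.indicator fun _ => (1 : ℝ) with hgdef
  have hg2 : MemLp g (ENNReal.ofReal 2) μ :=
    memLp_indicator_const _ hA 1 (Or.inr (measure_ne_top μ A))
  have hpq : (2 : ℝ).HolderConjugate 2 := (Real.holderConjugate_iff_eq_conjExponent one_lt_two).mpr (by norm_num)
  have holder := integral_mul_le_Lp_mul_Lq_of_nonneg hpq
    (Filter.Eventually.of_forall hfnonneg)
    (Filter.Eventually.of_forall fun ω => Set.indicator_nonneg (fun _ _ => zero_le_one) ω)
    hf2 hg2
  -- ∫ f * g = ∫ over A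
  have hfg : ∫ ω, f ω * g ω ∂μ = ∫ ω in A, f ω ∂μ := by
    rw [← integral_indicator hA]
    congr 1; ext ω
    by_cases h : ω ∈ A <;> simp [hgdef, Set.indicator, h]
  -- ∫ f ^ (2:ℝ) = ∫ ‖X‖^(2q)
  have hf2eq : ∫ ω, f ω ^ (2 : ℝ) ∂μ = ∫ ω, ‖X ω‖ ^ (2 * q) ∂μ := by
    refine integral_congr_ae (Filter.Eventually.of_forall fun ω => ?_)
    show f ω ^ (2 : ℝ) = ‖X ω‖ ^ (2 * q)
    rw [hsq ω, ← Real.rpow_natCast (f ω) 2]; norm_num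
  -- ∫ g ^ (2:ℝ) = μ A
  have hg2eq : ∫ ω, g ω ^ (2 : ℝ) ∂μ = (μ A).toReal := by
    have : ∀ ω, g ω ^ (2 : ℝ) = g ω := by
      intro ω
      by_cases h : ω ∈ A <;>
        simp [hgdef, Set.indicator, h, Real.zero_rpow (two_ne_zero)]
    simp_rw [this, hgdef, integral_indicator hA]
    simp; rfl
  -- tail bound in real form
  have hμA : (μ A).toReal ≤ 1 / (4 * K ^ 2) := by
    have := ENNReal.toReal_mono ENNReal.ofReal_ne_top htail
    rwa [ENNReal.toReal_ofReal (by positivity)] at this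
  have hroot : ((μ A).toReal) ^ ((1 : ℝ) / 2) ≤ 1 / (2 * K) := by
    have h1 : ((μ A).toReal) ^ ((1 : ℝ) / 2) ≤ (1 / (4 * K ^ 2)) ^ ((1 : ℝ) / 2) :=
      Real.rpow_le_rpow ENNReal.toReal_nonneg hμA (by norm_num)
    have h2 : ((1 : ℝ) / (4 * K ^ 2)) ^ ((1 : ℝ) / 2) = 1 / (2 * K) := by
      rw [show (1 : ℝ) / (4 * K ^ 2) = (1 / (2 * K)) ^ (2 : ℕ) by field_simp; ring,
        ← Real.rpow_natCast (1 / (2 * K)) 2, ← Real.rpow_mul (by positivity)]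
      norm_num
    linarith
  -- bound on A
  have hbA : ∫ ω in A, f ω ∂μ ≤ (K * ∫ ω, f ω ∂μ) * (1 / (2 * K)) := by
    rw [← hfg]
    calc ∫ ω, f ω * g ω ∂μ
        ≤ (∫ ω, f ω ^ (2:ℝ) ∂μ) ^ ((1:ℝ)/2) * (∫ ω, g ω ^ (2:ℝ) ∂μ) ^ ((1:ℝ)/2) := holder
      _ ≤ (K * ∫ ω, f ω ∂μ) * (1 / (2 * K)) := by
          rw [hf2eq, hg2eq]
          have h0 : (0:ℝ) ≤ (∫ ω, ‖X ω‖ ^ (2*q) ∂μ) ^ ((1:ℝ)/2) :=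
            Real.rpow_nonneg (integral_nonneg fun ω => Real.rpow_nonneg (norm_nonneg _) _) _
          exact mul_le_mul hrev hroot (Real.rpow_nonneg ENNReal.toReal_nonneg _)
            (le_trans h0 hrev)
  -- bound on complement
  have hbAc : ∫ ω in Aᶜ, f ω ∂μ ≤ R ^ q := by
    have h1 : ∫ ω in Aᶜ, f ω ∂μ ≤ ∫ _ω in Aᶜ, R ^ q ∂μ := by
      refine setIntegral_mono_on hfint.integrableOn ((integrableOn_const_iff).mpr (Or.inr ?_)) hA.compl
        fun ω hω => ?_
      · exact lt_of_le_of_lt (measure_mono (Set.subset_univ _)) (by simp)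
      · exact Real.rpow_le_rpow (norm_nonneg _) (not_lt.mp hω) hq.le
    rw [setIntegral_const, smul_eq_mul] at h1
    change _ ≤ (μ Aᶜ).toReal * R ^ q at h1
    have h2 : (μ Aᶜ).toReal ≤ 1 := by
      have := ENNReal.toReal_mono ENNReal.one_ne_top (prob_le_one (μ := μ) (s := Aᶜ))
      simpa using this
    nlinarith [Real.rpow_nonneg hR.le q]
  have hsplit : ∫ ω, f ω ∂μ = ∫ ω in A, f ω ∂μ + ∫ ω in Aᶜ, f ω ∂μ :=
    (integral_add_compl hA hfint).symm
  set I : ℝ := ∫ ω, f ω ∂μ with hIdef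
  have hKI : K * I * (1 / (2 * K)) = I / 2 := by
    field_simp
  show I ≤ 2 * R ^ q
  linarith [hbA, hbAc, hsplit]
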